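/- Every formula of arrow update model logic (modal logic extended with arrow update modalities [U,o]) is semantically equivalent to a formula of basic multi-agent modal logic. -/

import Mathlib

namespace AAUML

/-- Formulas of arbitrary arrow update model logic over atoms `P` and agents `A`.
An arrow update model is encoded as a finite list of arrows
`(agent, source outcome, source condition, target outcome, target condition)`,
with outcomes drawn from `ℕ`; `upd U o φ` is `[U,o]φ` and `all φ` is `[↑]φ`. -/
inductive Form (P A : Type) : Type where
  | atom : P → Form P A
  | neg  : Form P A → Form P A
  | and  : Form P A → Form P A → Form P A
  | box  : A → Form P A → Form P A
  | upd  : List (A × ℕ × Form P A × ℕ × Form P A) → ℕ → Form P A → Form P A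
  | all  : Form P A → Form P A

/-- An arrow: agent, source outcome, source condition, target outcome, target condition. -/
abbrev Arrow (P A : Type) := A × ℕ × Form P A × ℕ × Form P A

/-- Formulas of basic multi-agent modal logic: no update modality, no quantifier. -/
inductive Form.Modal {P A : Type} : Form P A → Prop
  | atom (p : P) : Form.Modal (.atom p)
  | neg {φ : Form P A} : Form.Modal φ → Form.Modal (.neg φ)
  | and {φ ψ : Form P A} : Form.Modal φ → Form.Modal ψ → Form.Modal (.and φ ψ)
  | box (a : A) {φ : Form P A} : Form.Modal φ → Form.Modal (.box a φ)

/-- Formulas of arrow update model logic (no arbitrary-update quantifier anywhere,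
including inside the conditions of arrow update models). -/
inductive Form.NoQuant {P A : Type} : Form P A → Prop
  | atom (p : P) : Form.NoQuant (.atom p)
  | neg {φ : Form P A} : Form.NoQuant φ → Form.NoQuant (.neg φ)
  | and {φ ψ : Form P A} : Form.NoQuant φ → Form.NoQuant ψ → Form.NoQuant (.and φ ψ)
  | box (a : A) {φ : Form P A} : Form.NoQuant φ → Form.NoQuant (.box a φ)
  | upd {U : List (Arrow P A)} (o : ℕ) {φ : Form P A} : Form.NoQuant φ →
      (∀ ar ∈ U, Form.NoQuant ar.2.2.1) → (∀ ar ∈ U, Form.NoQuant ar.2.2.2.2) →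
      Form.NoQuant (.upd U o φ)

/-- Propositional formulas (no modalities at all). -/
inductive Form.Prp {P A : Type} : Form P A → Prop
  | atom (p : P) : Form.Prp (.atom p)
  | neg {φ : Form P A} : Form.Prp φ → Form.Prp (.neg φ)
  | and {φ ψ : Form P A} : Form.Prp φ → Form.Prp ψ → Form.Prp (.and φ ψ)

/-- A relational (Kripke) model. -/
structure KModel (P A : Type) : Type 1 where
  World : Type
  R : A → World → World → Prop
  V : World → P → Prop

variable {P A : Type}

/-- Satisfaction for basic modal formulas (junk value `False` on updates/quantifiers;
only used on modal formulas). -/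
def msat (M : KModel P A) : M.World → Form P A → Prop
  | s, .atom p => M.V s p
  | s, .neg φ => ¬ msat M s φ
  | s, .and φ ψ => msat M s φ ∧ msat M s ψ
  | s, .box a φ => ∀ t, M.R a s t → msat M t φ
  | _, .upd _ _ _ => False
  | _, .all _ => False

/-- Some arrow of `U` for agent `a` from outcome `o` to outcome `o'` has its (modal)
source condition true at `s` and its target condition true at `s'`. -/
def marrowOK (M : KModel P A) (U : List (Arrow P A)) (a : A) (o o' : ℕ)
    (s s' : M.World) : Prop :=
  ∃ ψ ψ', (a, o, ψ, o', ψ') ∈ U ∧ msat M s ψ ∧ msat M s' ψ'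

/-- All source and target conditions of `U` are basic modal formulas. -/
def ModalArrows (U : List (Arrow P A)) : Prop :=
  ∀ ar ∈ U, Form.Modal ar.2.2.1 ∧ Form.Modal ar.2.2.2.2

mutual
  /-- Satisfaction `M,s ⊨ φ`.  The case `upd U o φ` is interpreted in the product
  model `M*U` (inlined); `all φ` quantifies over all arrow update models with basic
  modal source and target conditions. -/
  def Form.sat : (M : KModel P A) → M.World → Form P A → Prop
    | M, s, .atom p => M.V s p
    | M, s, .neg φ => ¬ Form.sat M s φ
    | M, s, .and φ ψ => Form.sat M s φ ∧ Form.sat M s ψ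
    | M, s, .box a φ => ∀ t, M.R a s t → Form.sat M t φ
    | M, s, .upd U o φ =>
        Form.sat ⟨M.World × ℕ,
          fun a x y => M.R a x.1 y.1 ∧ satList M U a x.2 y.2 x.1 y.1,
          fun x p => M.V x.1 p⟩ (s, o) φ
    | M, s, .all φ => ∀ (U : List (Arrow P A)) (o : ℕ), ModalArrows U →
        Form.sat ⟨M.World × ℕ,
          fun a x y => M.R a x.1 y.1 ∧ marrowOK M U a x.2 y.2 x.1 y.1,
          fun x p => M.V x.1 p⟩ (s, o) φ
  termination_by M s φ => sizeOf φ

  /-- Some arrow of the list, for agent `a`, from `o` to `o'`, has its source condition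
  true at `s` and its target condition true at `s'`. -/
  def satList : (M : KModel P A) → List (Arrow P A) → A → ℕ → ℕ → M.World → M.World → Prop
    | _, [], _, _, _, _, _ => False
    | M, (b, o1, ψ, o2, ψ') :: rest, a, o, o', s, s' =>
        (b = a ∧ o1 = o ∧ o2 = o' ∧ Form.sat M s ψ ∧ Form.sat M s' ψ') ∨
        satList M rest a o o' s s'
  termination_by M U a o o' s s' => sizeOf U
end

/-- The product `M*U` of a relational model and an arrow update model. -/
def prodModel (M : KModel P A) (U : List (Arrow P A)) : KModel P A :=
  ⟨M.World × ℕ,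
   fun a x y => M.R a x.1 y.1 ∧ satList M U a x.2 y.2 x.1 y.1,
   fun x p => M.V x.1 p⟩

def Valid (φ : Form P A) : Prop := ∀ (M : KModel P A) (s : M.World), Form.sat M s φ

def Form.or (φ ψ : Form P A) : Form P A := .neg (.and (.neg φ) (.neg ψ))
def Form.imp (φ ψ : Form P A) : Form P A := .neg (.and φ (.neg ψ))
def Form.dia (a : A) (φ : Form P A) : Form P A := .neg (.box a (.neg φ))
/-- `⟨U,o⟩φ` -/
def Form.diaUpd (U : List (Arrow P A)) (o : ℕ) (φ : Form P A) : Form P A :=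
  .neg (.upd U o (.neg φ))
/-- `⟨↑⟩φ` -/
def Form.ex (φ : Form P A) : Form P A := .neg (.all (.neg φ))
/-- A canonical tautology. -/
def Form.top [Inhabited P] : Form P A := .neg (.and (.atom default) (.neg (.atom default)))
/-- Finite conjunction. -/
def Form.conj [Inhabited P] : List (Form P A) → Form P A
  | [] => Form.top
  | φ :: rest => .and φ (Form.conj rest)

/-- `Z` is a bisimulation between `M` and `N`. -/
def IsBisim (M N : KModel P A) (Z : M.World → N.World → Prop) : Prop :=
  ∀ s s', Z s s' →
    (∀ p, M.V s p ↔ N.V s' p) ∧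
    (∀ a t, M.R a s t → ∃ t', N.R a s' t' ∧ Z t t') ∧
    (∀ a t', N.R a s' t' → ∃ t, M.R a s t ∧ Z t t')

/-- Bisimilarity of pointed models. -/
def Bisimilar (M : KModel P A) (s : M.World) (N : KModel P A) (s' : N.World) : Prop :=
  ∃ Z, IsBisim M N Z ∧ Z s s'

/-- An action model: actions with accessibility relations and preconditions. -/
structure AModel (P A : Type) : Type 1 where
  Action : Type
  rel : A → Action → Action → Prop
  pre : Action → Form P A

/-- The restricted modal product `M ⊗ E`. -/
def actProd (M : KModel P A) (E : AModel P A) : KModel P A :=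
  ⟨{x : M.World × E.Action // Form.sat M x.1 (E.pre x.2)},
   fun a x y => M.R a x.1.1 y.1.1 ∧ E.rel a x.1.2 y.1.2,
   fun x p => M.V x.1.1 p⟩

/-- `M,s ⊨ [E,e]φ`: if the precondition of `e` holds at `s` then `φ` holds at `(s,e)`
in `M ⊗ E`. -/
def actSat (M : KModel P A) (E : AModel P A) (s : M.World) (e : E.Action)
    (φ : Form P A) : Prop :=
  ∀ h : Form.sat M s (E.pre e), Form.sat (actProd M E) ⟨(s, e), h⟩ φ

variable {P A : Type}

lemma sat_atom (M : KModel P A) (s : M.World) (p : P) :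
    Form.sat M s (.atom p) ↔ M.V s p := by rw [Form.sat]
lemma sat_neg (M : KModel P A) (s : M.World) (φ : Form P A) :
    Form.sat M s (.neg φ) ↔ ¬ Form.sat M s φ := by rw [Form.sat]
lemma sat_and (M : KModel P A) (s : M.World) (φ ψ : Form P A) :
    Form.sat M s (.and φ ψ) ↔ Form.sat M s φ ∧ Form.sat M s ψ := by rw [Form.sat]
lemma sat_box (M : KModel P A) (s : M.World) (a : A) (φ : Form P A) :
    Form.sat M s (.box a φ) ↔ ∀ t, M.R a s t → Form.sat M t φ := by rw [Form.sat]
lemma sat_upd (M : KModel P A) (s : M.World) (U : List (Arrow P A)) (o : ℕ) (φ : Form P A) :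
    Form.sat M s (.upd U o φ) ↔ Form.sat (prodModel M U) (s, o) φ := by rw [Form.sat]; rfl

lemma sat_imp (M : KModel P A) (s : M.World) (φ ψ : Form P A) :
    Form.sat M s (φ.imp ψ) ↔ (Form.sat M s φ → Form.sat M s ψ) := by
  simp [Form.imp, sat_neg, sat_and]

lemma sat_top [Inhabited P] (M : KModel P A) (s : M.World) :
    Form.sat M s Form.top := by
  simp [Form.top, sat_neg, sat_and]

lemma sat_conj [Inhabited P] (M : KModel P A) (s : M.World) (L : List (Form P A)) :
    Form.sat M s (Form.conj L) ↔ ∀ χ ∈ L, Form.sat M s χ := by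
  induction L with
  | nil => simpa [Form.conj] using sat_top M s
  | cons χ rest ih => simp [Form.conj, sat_and, ih]

lemma Modal_top [Inhabited P] : (Form.top : Form P A).Modal :=
  .neg (.and (.atom _) (.neg (.atom _)))
lemma Modal_imp {φ ψ : Form P A} (h1 : φ.Modal) (h2 : ψ.Modal) : (φ.imp ψ).Modal :=
  .neg (.and h1 (.neg h2))
lemma Modal_conj [Inhabited P] {L : List (Form P A)} (h : ∀ χ ∈ L, χ.Modal) :
    (Form.conj L).Modal := by
  induction L with
  | nil => exact Modal_top
  | cons χ rest ih =>
      exact .and (h χ (by simp)) (ih fun x hx => h x (by simp [hx]))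

lemma nonemptyP : Form P A → Nonempty P
  | .atom p => ⟨p⟩
  | .neg φ => nonemptyP φ
  | .and φ _ => nonemptyP φ
  | .box _ φ => nonemptyP φ
  | .upd _ _ φ => nonemptyP φ
  | .all φ => nonemptyP φ

lemma satList_iff (M : KModel P A) (U : List (Arrow P A)) (a : A) (o o' : ℕ)
    (s t : M.World) :
    satList M U a o o' s t ↔
      ∃ χ χ', (a, o, χ, o', χ') ∈ U ∧ Form.sat M s χ ∧ Form.sat M t χ' := by
  induction U with
  | nil => simp [satList]
  | cons ar rest ih =>
      obtain ⟨b, o1, χ, o2, χ'⟩ := ar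
      rw [satList, ih]
      constructor
      · rintro (⟨rfl, rfl, rfl, h1, h2⟩ | ⟨χ, χ', h1, h2, h3⟩)
        · exact ⟨χ, χ', by simp, ‹_›, ‹_›⟩
        · exact ⟨χ, χ', by simp [h1], h2, h3⟩
      · rintro ⟨ψ, ψ', h1, h2, h3⟩
        rcases List.mem_cons.1 h1 with h | h
        · left; injection h with e1 e2; injection e2 with e2 e3
          injection e3 with e3 e4; injection e4 with e4 e5
          subst e1; subst e2; subst e4; subst e3; subst e5
          exact ⟨rfl, rfl, rfl, h2, h3⟩
        · exact Or.inr ⟨ψ, ψ', h, h2, h3⟩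

lemma sat_congr {W : Type} (V : W → P → Prop) (R R' : A → W → W → Prop)
    (hR : ∀ a x y, R a x y ↔ R' a x y) {ψ : Form P A} (hψ : ψ.Modal) :
    ∀ s, Form.sat ⟨W, R, V⟩ s ψ ↔ Form.sat ⟨W, R', V⟩ s ψ := by
  induction hψ with
  | atom p => intro s; rw [sat_atom, sat_atom]
  | neg _ ih => intro s; rw [sat_neg, sat_neg, ih s]
  | and _ _ ih1 ih2 => intro s; rw [sat_and, sat_and, ih1 s, ih2 s]
  | box a _ ih =>
      intro s; rw [sat_box, sat_box]
      exact ⟨fun h t ht => (ih t).1 (h t ((hR a s t).2 ht)),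
             fun h t ht => (ih t).2 (h t ((hR a s t).1 ht))⟩

lemma reduce_upd [Inhabited P] (U : List (Arrow P A)) (hU : ModalArrows U)
    {ψ : Form P A} (hψ : ψ.Modal) :
    ∀ o : ℕ, ∃ ψ' : Form P A, ψ'.Modal ∧
      ∀ (M : KModel P A) (s : M.World), Form.sat M s (.upd U o ψ) ↔ Form.sat M s ψ' := by
  classical
  induction hψ with
  | atom p =>
      intro o
      exact ⟨.atom p, .atom p, fun M s => by
        rw [sat_upd, sat_atom (prodModel M U) (s, o), sat_atom]; exact Iff.rfl⟩
  | neg _ ih =>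
      intro o
      obtain ⟨χ, hχ, he⟩ := ih o
      refine ⟨.neg χ, .neg hχ, fun M s => ?_⟩
      rw [sat_upd, sat_neg (prodModel M U) (s, o), sat_neg, ← he M s, sat_upd]
  | and _ _ ih1 ih2 =>
      intro o
      obtain ⟨χ1, hχ1, he1⟩ := ih1 o
      obtain ⟨χ2, hχ2, he2⟩ := ih2 o
      refine ⟨.and χ1 χ2, .and hχ1 hχ2, fun M s => ?_⟩
      rw [sat_upd, sat_and (prodModel M U) (s, o), sat_and, ← he1 M s, ← he2 M s, sat_upd, sat_upd]
  | @box a ψ _ ih =>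
      intro o
      choose g hg1 hg2 using ih
      refine ⟨Form.conj (U.map fun ar =>
          if ar.1 = a ∧ ar.2.1 = o then
            (ar.2.2.1).imp (.box a ((ar.2.2.2.2).imp (g ar.2.2.2.1)))
          else Form.top), ?_, ?_⟩
      · apply Modal_conj
        intro χ hχ
        simp only [List.mem_map] at hχ
        obtain ⟨ar, har, rfl⟩ := hχ
        split
        · exact Modal_imp (hU ar har).1 (.box a (Modal_imp (hU ar har).2 (hg1 _)))
        · exact Modal_top
      · intro M s
        rw [sat_upd, sat_box (prodModel M U) (s, o), sat_conj]
        constructor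
        · intro H χ hχ
          simp only [List.mem_map] at hχ
          obtain ⟨⟨b, o1, χ1, o2, χ2⟩, har, rfl⟩ := hχ
          by_cases hm : b = a ∧ o1 = o
          · obtain ⟨rfl, rfl⟩ := hm
            have hc : b = b ∧ o1 = o1 := ⟨rfl, rfl⟩
            rw [if_pos hc, sat_imp]
            intro h1
            rw [sat_box]
            intro t ht
            rw [sat_imp]
            intro h2
            have hsl : satList M U b o1 o2 s t :=
              (satList_iff M U b o1 o2 s t).2 ⟨χ1, χ2, har, h1, h2⟩
            have := H (t, o2) ⟨ht, hsl⟩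
            rw [← hg2 o2 M t, sat_upd]
            exact this
          · simp only [if_neg hm]; exact sat_top M s
        · rintro H ⟨t, o2⟩ ⟨hR, hsl⟩
          obtain ⟨χ1, χ2, hmem, h1, h2⟩ := (satList_iff M U a o o2 s t).1 hsl
          have := H _ (List.mem_map.2 ⟨(a, o, χ1, o2, χ2), hmem, rfl⟩)
          have hc : a = a ∧ o = o := ⟨rfl, rfl⟩
          rw [if_pos hc, sat_imp] at this
          have := this h1
          rw [sat_box] at this
          have := this t hR
          rw [sat_imp] at this
          have h3 : Form.sat M t (g o2) := this h2
          exact (sat_upd M t U o2 ψ).1 ((hg2 o2 M t).2 h3)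

lemma exists_modal_arrows (U : List (Arrow P A))
    (h1 : ∀ ar ∈ U, ∃ χ : Form P A, χ.Modal ∧
        ∀ (M : KModel P A) (s : M.World), Form.sat M s ar.2.2.1 ↔ Form.sat M s χ)
    (h2 : ∀ ar ∈ U, ∃ χ : Form P A, χ.Modal ∧
        ∀ (M : KModel P A) (s : M.World), Form.sat M s ar.2.2.2.2 ↔ Form.sat M s χ) :
    ∃ U' : List (Arrow P A), ModalArrows U' ∧
      ∀ (M : KModel P A) (a : A) (o o' : ℕ) (s t : M.World),
        satList M U a o o' s t ↔ satList M U' a o o' s t := by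
  induction U with
  | nil => exact ⟨[], by simp [ModalArrows], fun M a o o' s t => Iff.rfl⟩
  | cons ar rest ih =>
      obtain ⟨χ1, hχ1, he1⟩ := h1 ar (by simp)
      obtain ⟨χ2, hχ2, he2⟩ := h2 ar (by simp)
      obtain ⟨U', hU', hsl⟩ :=
        ih (fun x hx => h1 x (by simp [hx])) (fun x hx => h2 x (by simp [hx]))
      obtain ⟨b, o1, ψ1, o2, ψ2⟩ := ar
      refine ⟨(b, o1, χ1, o2, χ2) :: U', ?_, ?_⟩
      · rintro x hx
        rcases List.mem_cons.1 hx with rfl | hx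
        · exact ⟨hχ1, hχ2⟩
        · exact hU' x hx
      · intro M a o o' s t
        rw [satList, satList, hsl M a o o' s t, he1 M s, he2 M t]


/-- every formula of arrow update model logic is semantically
equivalent to a formula of basic multi-agent modal logic. -/
theorem auml_reduction (P A : Type) (φ : Form P A) (h : φ.NoQuant) :
    ∃ φ' : Form P A, φ'.Modal ∧
      ∀ (M : KModel P A) (s : M.World), Form.sat M s φ ↔ Form.sat M s φ' := by
  induction h with
  | atom p => exact ⟨.atom p, .atom p, fun M s => Iff.rfl⟩
  | neg _ ih =>
      obtain ⟨χ, h1, h2⟩ := ih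
      exact ⟨.neg χ, .neg h1, fun M s => by rw [sat_neg, sat_neg, h2 M s]⟩
  | and _ _ ih1 ih2 =>
      obtain ⟨χ1, h1, h2⟩ := ih1
      obtain ⟨χ3, h3, h4⟩ := ih2
      exact ⟨.and χ1 χ3, .and h1 h3,
        fun M s => by rw [sat_and, sat_and, h2 M s, h4 M s]⟩
  | box a _ ih =>
      obtain ⟨χ, h1, h2⟩ := ih
      refine ⟨.box a χ, .box a h1, fun M s => ?_⟩
      rw [sat_box, sat_box]
      exact forall_congr' fun t => imp_congr Iff.rfl (h2 M t)
  | @upd U o φ _ _ _ ihφ ihsrc ihtgt =>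
      haveI : Inhabited P := Classical.inhabited_of_nonempty (nonemptyP φ)
      obtain ⟨φ'', hm, he⟩ := ihφ
      obtain ⟨U', hU', hsl⟩ := exists_modal_arrows U ihsrc ihtgt
      obtain ⟨ρ, hρ1, hρ2⟩ := reduce_upd U' hU' hm o
      refine ⟨ρ, hρ1, fun M s => ?_⟩
      rw [sat_upd, he (prodModel M U) (s, o), ← hρ2 M s, sat_upd]
      exact sat_congr _ _ _
        (fun a x y => and_congr Iff.rfl (hsl M a x.2 y.2 x.1 y.1)) hm (s, o)

end AAUML
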